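/- Let ζ ∈ (1, 2], α ∈ (0,1), and let h : [0,1] × ℝ → ℝ be a continuous function such that for all t ∈ [0,1] and all x, y ∈ ℝ with x ≤ y, |h(t,x) − h(t,y)| ≤ (α Γ(ζ+1)/4) |x − y|. Define the operator T on C([0,1], ℝ) by (T u)(t) = (1/Γ(ζ)) ∫₀ᵗ (t − s)^{ζ−1} h(s, u(s)) ds + (2t/Γ(ζ)) ∫₀¹ ( ∫₀ˢ (s − m)^{ζ−1} h(m, u(m)) dm ) ds. Then for all u, v ∈ C([0,1], ℝ) with u(t) ≤ v(t) for all t ∈ [0,1], sup_{t ∈ [0,1]} |(T u)(t) − (T v)(t)| ≤ α · sup_{t ∈ [0,1]} |u(t) − v(t)|. -/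

import Mathlib

open Real Set

/-- The integral operator associated with the Caputo fractional boundary value
problem `D^ζ f(t) = h(t, f(t))`, `f(0) = 0`, `I f(1) = f'(0)`. -/
noncomputable def fracOp (ζ : ℝ) (h : ℝ → ℝ → ℝ) (u : ℝ → ℝ) : ℝ → ℝ :=
  fun t =>
    (1 / Real.Gamma ζ) * ∫ s in (0 : ℝ)..t, (t - s) ^ (ζ - 1) * h s (u s) +
      (2 * t / Real.Gamma ζ) *
        ∫ s in (0 : ℝ)..1, ∫ m in (0 : ℝ)..s, (s - m) ^ (ζ - 1) * h m (u m)

open MeasureTheory intervalIntegral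

lemma one_le_Gamma_of_two_le {y : ℝ} (hy : 2 ≤ y) : 1 ≤ Real.Gamma y := by
  rcases eq_or_lt_of_le hy with rfl | hy'
  · rw [Real.Gamma_two]
  · have h1 : (1:ℝ) ∈ Set.Ioi (0:ℝ) := by norm_num
    have h2 : y ∈ Set.Ioi (0:ℝ) := by simp only [Set.mem_Ioi]; linarith
    have hym : (0:ℝ) < y - 1 := by linarith
    have hla : (0:ℝ) ≤ (y-2)/(y-1) := div_nonneg (by linarith) (by linarith)
    have hmu : (0:ℝ) < 1/(y-1) := by positivity
    have hsum : (y-2)/(y-1) + 1/(y-1) = 1 := by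
      rw [← add_div, div_eq_one_iff_eq (by linarith : y - 1 ≠ 0)]; ring
    have hkey := Real.convexOn_Gamma.2 h1 h2 hla hmu.le hsum
    rw [smul_eq_mul, smul_eq_mul, smul_eq_mul, smul_eq_mul] at hkey
    have harg : (y-2)/(y-1) * 1 + 1/(y-1) * y = 2 := by field_simp; ring
    rw [harg, Real.Gamma_two, Real.Gamma_one] at hkey
    nlinarith [hkey, hmu]

lemma contOn_fracInt (ζ : ℝ) (hζ : 1 < ζ) (g : ℝ → ℝ)
    (hg : ContinuousOn g (Set.Icc 0 1)) :
    ContinuousOn (fun s => ∫ m in (0:ℝ)..s, (s - m) ^ (ζ - 1) * g m)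
      (Set.Icc (0:ℝ) 1) := by
  have hp : (0:ℝ) < ζ - 1 := by linarith
  have hrc : Continuous fun x : ℝ => x ^ (ζ - 1) := Real.continuous_rpow_const hp.le
  set G : ℝ → ℝ → ℝ := fun s m => (max (min s 1 - m) 0) ^ (ζ - 1) * g m with hG
  have hGm : ∀ s, ContinuousOn (G s) (Set.Icc (0:ℝ) 1) := by
    intro s
    exact ((hrc.comp ((continuous_const.sub continuous_id).max
      continuous_const)).continuousOn).mul hg
  have hcont : Continuous fun s => ∫ m in (0:ℝ)..1, G s m := by
    apply intervalIntegral.continuous_of_dominated_interval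
      (bound := fun m => |g m|)
    · intro s
      have hsub : Set.uIoc (0:ℝ) 1 ⊆ Set.Icc (0:ℝ) 1 := by
        rw [Set.uIoc_of_le (zero_le_one (α := ℝ))]
        exact Set.Ioc_subset_Icc_self
      exact ((hGm s).mono hsub).aestronglyMeasurable measurableSet_uIoc
    · intro s
      filter_upwards with m hm
      rw [Set.uIoc_of_le zero_le_one] at hm
      have hb0 : (0:ℝ) ≤ max (min s 1 - m) 0 := le_max_right _ _
      have hb1 : max (min s 1 - m) 0 ≤ 1 := by
        apply max_le _ zero_le_one
        have := min_le_right s 1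
        linarith [hm.1.le]
      have : ‖G s m‖ = (max (min s 1 - m) 0) ^ (ζ - 1) * |g m| := by
        rw [Real.norm_eq_abs, hG, abs_mul, abs_of_nonneg (Real.rpow_nonneg hb0 _)]
      rw [this]
      calc (max (min s 1 - m) 0) ^ (ζ - 1) * |g m| ≤ 1 * |g m| :=
            mul_le_mul_of_nonneg_right (Real.rpow_le_one hb0 hb1 hp.le) (abs_nonneg _)
        _ = |g m| := one_mul _
    · apply ContinuousOn.intervalIntegrable
      rw [Set.uIcc_of_le zero_le_one]
      exact hg.abs
    · filter_upwards with m hm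
      exact (hrc.comp (((continuous_id.min continuous_const).sub
        continuous_const).max continuous_const)).mul continuous_const
  apply hcont.continuousOn.congr
  intro s hs
  have hint_a : IntervalIntegrable (G s) volume 0 s := by
    apply ContinuousOn.intervalIntegrable
    rw [Set.uIcc_of_le hs.1]
    exact (hGm s).mono (Set.Icc_subset_Icc le_rfl hs.2)
  have hint_b : IntervalIntegrable (G s) volume s 1 := by
    apply ContinuousOn.intervalIntegrable
    rw [Set.uIcc_of_le hs.2]
    exact (hGm s).mono (Set.Icc_subset_Icc hs.1 le_rfl)
  have h1 : ∫ m in s..(1:ℝ), G s m = 0 := by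
    rw [show (0:ℝ) = ∫ m in s..(1:ℝ), (0:ℝ) by simp]
    apply intervalIntegral.integral_congr
    intro m hm
    rw [Set.uIcc_of_le hs.2] at hm
    have : min s 1 - m ≤ 0 := by
      have := min_le_left s 1
      linarith [hm.1]
    simp only [hG]
    rw [max_eq_right this, Real.zero_rpow (ne_of_gt hp), zero_mul]
  have h2 : ∫ m in (0:ℝ)..s, G s m = ∫ m in (0:ℝ)..s, (s - m) ^ (ζ - 1) * g m := by
    apply intervalIntegral.integral_congr
    intro m hm
    rw [Set.uIcc_of_le hs.1] at hm
    have hms : min s 1 = s := min_eq_left hs.2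
    have : max (min s 1 - m) 0 = s - m := by
      rw [hms]; exact max_eq_left (by linarith [hm.2])
    simp only [hG, this]
  show (∫ m in (0:ℝ)..s, (s - m) ^ (ζ - 1) * g m) = ∫ m in (0:ℝ)..1, G s m
  rw [← intervalIntegral.integral_add_adjacent_intervals hint_a hint_b, h1, add_zero, h2]

set_option maxHeartbeats 1600000 in
/-- Contraction estimate for the fractional integral operator on comparable
functions: if `|h(t,x) − h(t,y)| ≤ (α Γ(ζ+1)/4)|x − y|` for `x ≤ y`, then for
pointwise comparable `u ≤ v` on `[0,1]`,
`sup_{t ∈ [0,1]} |(T u)(t) − (T v)(t)| ≤ α · sup_{t ∈ [0,1]} |u(t) − v(t)|`. -/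
theorem fracOp_contraction (ζ : ℝ) (hζ : ζ ∈ Set.Ioc (1 : ℝ) 2)
    (α : ℝ) (hα : α ∈ Set.Ioo (0 : ℝ) 1)
    (h : ℝ → ℝ → ℝ)
    (h_cont : ContinuousOn (Function.uncurry h) (Set.Icc (0 : ℝ) 1 ×ˢ Set.univ))
    (h_lip : ∀ t ∈ Set.Icc (0 : ℝ) 1, ∀ x y : ℝ, x ≤ y →
      |h t x - h t y| ≤ α * Real.Gamma (ζ + 1) / 4 * |x - y|)
    (u v : ℝ → ℝ)
    (hu : ContinuousOn u (Set.Icc (0 : ℝ) 1))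
    (hv : ContinuousOn v (Set.Icc (0 : ℝ) 1))
    (huv : ∀ t ∈ Set.Icc (0 : ℝ) 1, u t ≤ v t) :
    (⨆ t : Set.Icc (0 : ℝ) 1, |fracOp ζ h u t - fracOp ζ h v t|) ≤
      α * ⨆ t : Set.Icc (0 : ℝ) 1, |u t - v t| := by
  obtain ⟨hζ1, hζ2⟩ := hζ
  obtain ⟨hα0, hα1⟩ := hα
  have hζ0 : (0:ℝ) < ζ := by linarith
  have hp : (0:ℝ) < ζ - 1 := by linarith
  have hΓ : 0 < Real.Gamma ζ := Real.Gamma_pos_of_pos hζ0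
  have hΓ1 : 0 < Real.Gamma (ζ + 1) := Real.Gamma_pos_of_pos (by linarith)
  have hΓadd : Real.Gamma (ζ + 1) = ζ * Real.Gamma ζ := Real.Gamma_add_one (ne_of_gt hζ0)
  have hΓhalf : 1 / 2 ≤ Real.Gamma ζ := by
    have h1 := one_le_Gamma_of_two_le (y := ζ + 1) (by linarith)
    rw [hΓadd] at h1
    nlinarith
  set C := α * Real.Gamma (ζ + 1) / 4 with hCdef
  have hC0 : 0 ≤ C := by positivity
  haveI : Nonempty (Set.Icc (0:ℝ) 1) := ⟨⟨0, le_refl 0, zero_le_one⟩⟩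
  set M := ⨆ t : Set.Icc (0:ℝ) 1, |u ↑t - v ↑t| with hMdef
  have hcuv : ContinuousOn (fun t => |u t - v t|) (Set.Icc 0 1) := (hu.sub hv).abs
  have hbdd : BddAbove (Set.range fun t : Set.Icc (0:ℝ) 1 => |u ↑t - v ↑t|) := by
    have hb := (isCompact_Icc.image_of_continuousOn hcuv).bddAbove
    rwa [Set.image_eq_range] at hb
  have hMle : ∀ t ∈ Set.Icc (0:ℝ) 1, |u t - v t| ≤ M := fun t ht => le_ciSup hbdd ⟨t, ht⟩
  have hM0 : 0 ≤ M := le_trans (abs_nonneg _) (hMle 0 ⟨le_refl 0, zero_le_one⟩)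
  have hΔ : ∀ s ∈ Set.Icc (0:ℝ) 1, |h s (u s) - h s (v s)| ≤ C * M := by
    intro s hs
    refine le_trans (h_lip s hs _ _ (huv s hs)) ?_
    exact mul_le_mul_of_nonneg_left (hMle s hs) hC0
  have hrc : Continuous fun x : ℝ => x ^ (ζ - 1) := Real.continuous_rpow_const hp.le
  have hwcont : ∀ w : ℝ → ℝ, ContinuousOn w (Set.Icc 0 1) →
      ContinuousOn (fun s => h s (w s)) (Set.Icc (0:ℝ) 1) := by
    intro w hw
    have hpr : ContinuousOn (fun s : ℝ => (s, w s)) (Set.Icc (0:ℝ) 1) :=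
      continuousOn_id.prodMk hw
    exact h_cont.comp hpr (fun s hs => ⟨hs, trivial⟩)
  have hint1 : ∀ t ∈ Set.Icc (0:ℝ) 1, ∀ w : ℝ → ℝ, ContinuousOn w (Set.Icc 0 1) →
      IntervalIntegrable (fun s => (t - s) ^ (ζ - 1) * h s (w s)) volume 0 t := by
    intro t ht w hw
    apply ContinuousOn.intervalIntegrable
    rw [Set.uIcc_of_le ht.1]
    exact ((hrc.comp (continuous_const.sub continuous_id)).continuousOn).mul
      ((hwcont w hw).mono (Set.Icc_subset_Icc le_rfl ht.2))
  -- exact value of the kernel integral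
  have hkern : ∀ t ∈ Set.Icc (0:ℝ) 1, ∫ s in (0:ℝ)..t, (t - s) ^ (ζ - 1) = t ^ ζ / ζ := by
    intro t ht
    rw [intervalIntegral.integral_comp_sub_left (fun x => x ^ (ζ - 1)) t]
    simp only [sub_self, sub_zero]
    rw [integral_rpow (Or.inl (by linarith))]
    have he : ζ - 1 + 1 = ζ := by ring
    rw [he, Real.zero_rpow (ne_of_gt hζ0), sub_zero]
  -- single integral difference bound
  have hIbound : ∀ t ∈ Set.Icc (0:ℝ) 1,
      |(∫ s in (0:ℝ)..t, (t - s) ^ (ζ - 1) * h s (u s)) -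
        ∫ s in (0:ℝ)..t, (t - s) ^ (ζ - 1) * h s (v s)| ≤ C * M * (t ^ ζ / ζ) := by
    intro t ht
    rw [← intervalIntegral.integral_sub (hint1 t ht u hu) (hint1 t ht v hv)]
    have hgint : IntervalIntegrable (fun s => C * M * (t - s) ^ (ζ - 1)) volume 0 t :=
      (continuous_const.mul (hrc.comp (continuous_const.sub continuous_id))).intervalIntegrable 0 t
    have hb : |∫ s in (0:ℝ)..t, ((t - s) ^ (ζ - 1) * h s (u s) - (t - s) ^ (ζ - 1) * h s (v s))|
        ≤ |∫ s in (0:ℝ)..t, C * M * (t - s) ^ (ζ - 1)| := by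
      rw [← Real.norm_eq_abs]
      apply intervalIntegral.norm_integral_le_abs_of_norm_le _ hgint
      filter_upwards [MeasureTheory.ae_restrict_mem measurableSet_uIoc] with s hms
      rw [Set.uIoc_of_le ht.1] at hms
      have hs01 : s ∈ Set.Icc (0:ℝ) 1 := ⟨hms.1.le, le_trans hms.2 ht.2⟩
      have hts : (0:ℝ) ≤ t - s := by linarith [hms.2]
      have : (t - s) ^ (ζ - 1) * h s (u s) - (t - s) ^ (ζ - 1) * h s (v s) =
          (t - s) ^ (ζ - 1) * (h s (u s) - h s (v s)) := by ring
      rw [Real.norm_eq_abs, this, abs_mul, abs_of_nonneg (Real.rpow_nonneg hts _)]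
      calc (t - s) ^ (ζ - 1) * |h s (u s) - h s (v s)|
          ≤ (t - s) ^ (ζ - 1) * (C * M) :=
            mul_le_mul_of_nonneg_left (hΔ s hs01) (Real.rpow_nonneg hts _)
        _ = C * M * (t - s) ^ (ζ - 1) := by ring
    refine le_trans hb ?_
    rw [intervalIntegral.integral_const_mul, hkern t ht]
    rw [abs_of_nonneg (mul_nonneg (mul_nonneg hC0 hM0)
      (div_nonneg (Real.rpow_nonneg ht.1 _) hζ0.le))]
  -- continuity / integrability of the inner fractional integral
  have hintF : ∀ w : ℝ → ℝ, ContinuousOn w (Set.Icc 0 1) →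
      IntervalIntegrable (fun s => ∫ m in (0:ℝ)..s, (s - m) ^ (ζ - 1) * h m (w m))
        volume 0 1 := by
    intro w hw
    apply ContinuousOn.intervalIntegrable
    rw [Set.uIcc_of_le zero_le_one]
    exact contOn_fracInt ζ hζ1 _ (hwcont w hw)
  -- double integral difference bound
  have hJbound :
      |(∫ s in (0:ℝ)..1, ∫ m in (0:ℝ)..s, (s - m) ^ (ζ - 1) * h m (u m)) -
        ∫ s in (0:ℝ)..1, ∫ m in (0:ℝ)..s, (s - m) ^ (ζ - 1) * h m (v m)|
        ≤ C * M / (ζ * (ζ + 1)) := by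
    rw [← intervalIntegral.integral_sub (hintF u hu) (hintF v hv)]
    have hgint : IntervalIntegrable (fun s : ℝ => C * M * (s ^ ζ / ζ)) volume 0 1 :=
      (continuous_const.mul ((Real.continuous_rpow_const hζ0.le).div_const ζ)).intervalIntegrable 0 1
    have hb : |∫ s in (0:ℝ)..1, ((∫ m in (0:ℝ)..s, (s - m) ^ (ζ - 1) * h m (u m)) -
        ∫ m in (0:ℝ)..s, (s - m) ^ (ζ - 1) * h m (v m))|
        ≤ |∫ s in (0:ℝ)..1, C * M * (s ^ ζ / ζ)| := by
      rw [← Real.norm_eq_abs]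
      apply intervalIntegral.norm_integral_le_abs_of_norm_le _ hgint
      filter_upwards [MeasureTheory.ae_restrict_mem measurableSet_uIoc] with s hms
      rw [Set.uIoc_of_le zero_le_one] at hms
      have hs01 : s ∈ Set.Icc (0:ℝ) 1 := ⟨hms.1.le, hms.2⟩
      rw [Real.norm_eq_abs]
      have := hIbound s hs01
      calc |(∫ m in (0:ℝ)..s, (s - m) ^ (ζ - 1) * h m (u m)) -
            ∫ m in (0:ℝ)..s, (s - m) ^ (ζ - 1) * h m (v m)| ≤ C * M * (s ^ ζ / ζ) := this
        _ ≤ C * M * (s ^ ζ / ζ) := le_rfl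
    refine le_trans hb ?_
    rw [intervalIntegral.integral_const_mul]
    have hinner : ∫ s in (0:ℝ)..1, s ^ ζ / ζ = 1 / (ζ * (ζ + 1)) := by
      rw [intervalIntegral.integral_div, integral_rpow (Or.inl (by linarith))]
      rw [Real.one_rpow, Real.zero_rpow (by positivity), sub_zero]
      field_simp
    rw [hinner, abs_of_nonneg (by positivity)]
    rw [mul_one_div, mul_div_assoc]
  -- pointwise bound on the operator difference
  have hmain : ∀ t ∈ Set.Icc (0:ℝ) 1, |fracOp ζ h u t - fracOp ζ h v t| ≤ α * M := by
    intro t ht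
    have hsplit : ∀ w : ℝ → ℝ, ContinuousOn w (Set.Icc 0 1) →
        fracOp ζ h w t = (1 / Real.Gamma ζ) *
          ((∫ s in (0:ℝ)..t, (t - s) ^ (ζ - 1) * h s (w s)) +
            t * ((2 * t / Real.Gamma ζ) *
              ∫ s in (0:ℝ)..1, ∫ m in (0:ℝ)..s, (s - m) ^ (ζ - 1) * h m (w m))) := by
      intro w hw
      unfold fracOp
      rw [intervalIntegral.integral_add (hint1 t ht w hw) intervalIntegrable_const]
      rw [intervalIntegral.integral_const]
      rw [sub_zero, smul_eq_mul]
    rw [hsplit u hu, hsplit v hv]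
    set Iu := ∫ s in (0:ℝ)..t, (t - s) ^ (ζ - 1) * h s (u s) with hIu
    set Iv := ∫ s in (0:ℝ)..t, (t - s) ^ (ζ - 1) * h s (v s) with hIv
    set Ju := ∫ s in (0:ℝ)..1, ∫ m in (0:ℝ)..s, (s - m) ^ (ζ - 1) * h m (u m) with hJu
    set Jv := ∫ s in (0:ℝ)..1, ∫ m in (0:ℝ)..s, (s - m) ^ (ζ - 1) * h m (v m) with hJv
    have hI := hIbound t ht
    have htζ : t ^ ζ ≤ 1 := Real.rpow_le_one ht.1 ht.2 hζ0.le
    have htζ0 : 0 ≤ t ^ ζ := Real.rpow_nonneg ht.1 _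
    have hexp : (1 / Real.Gamma ζ) * (Iu + t * (2 * t / Real.Gamma ζ * Ju)) -
        (1 / Real.Gamma ζ) * (Iv + t * (2 * t / Real.Gamma ζ * Jv)) =
        (1 / Real.Gamma ζ) * ((Iu - Iv) + (2 * t ^ 2 / Real.Gamma ζ) * (Ju - Jv)) := by
      ring
    rw [hexp, abs_mul, abs_of_nonneg (by positivity : (0:ℝ) ≤ 1 / Real.Gamma ζ)]
    have habs : |(Iu - Iv) + (2 * t ^ 2 / Real.Gamma ζ) * (Ju - Jv)| ≤
        C * M * (t ^ ζ / ζ) + (2 * t ^ 2 / Real.Gamma ζ) * (C * M / (ζ * (ζ + 1))) := by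
      refine le_trans (abs_add_le _ _) ?_
      apply add_le_add hI
      rw [abs_mul, abs_of_nonneg (by positivity : (0:ℝ) ≤ 2 * t ^ 2 / Real.Gamma ζ)]
      exact mul_le_mul_of_nonneg_left hJbound (by positivity)
    refine le_trans (mul_le_mul_of_nonneg_left habs (by positivity)) ?_
    have ht2 : t ^ 2 ≤ 1 := by nlinarith [ht.1, ht.2]
    have ht20 : (0:ℝ) ≤ t ^ 2 := sq_nonneg t
    have hstep : (1 / Real.Gamma ζ) *
        (C * M * (t ^ ζ / ζ) + (2 * t ^ 2 / Real.Gamma ζ) * (C * M / (ζ * (ζ + 1)))) ≤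
        (1 / Real.Gamma ζ) *
        (C * M * (1 / ζ) + (2 * 1 / Real.Gamma ζ) * (C * M / (ζ * (ζ + 1)))) := by
      gcongr
    refine le_trans hstep ?_
    have hCval : C = α * ζ * Real.Gamma ζ / 4 := by rw [hCdef, hΓadd]; ring
    rw [hCval]
    have key : (1 / Real.Gamma ζ) *
        ((α * ζ * Real.Gamma ζ / 4) * M * (1 / ζ) +
          (2 * 1 / Real.Gamma ζ) * ((α * ζ * Real.Gamma ζ / 4) * M / (ζ * (ζ + 1)))) =
        α * M / 4 + α * M / (2 * (Real.Gamma ζ * (ζ + 1))) := by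
      field_simp
      ring
    rw [key]
    have hX : (2:ℝ) ≤ 2 * (Real.Gamma ζ * (ζ + 1)) := by nlinarith
    have h2nd : α * M / (2 * (Real.Gamma ζ * (ζ + 1))) ≤ α * M / 2 := by
      apply div_le_div_of_nonneg_left (mul_nonneg hα0.le hM0) (by norm_num) hX
    have hαM : 0 ≤ α * M := mul_nonneg hα0.le hM0
    linarith
  apply ciSup_le
  intro t
  exact hmain t t.2
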